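/- arXiv:2411.07582 — 4 statements merged into one kernel-verified Lean document; each statement's English description precedes it below -/
import Mathlib

section
/- Let F be a free commutative monoid and let → be a binary relation on F∖{0} that is the reflexive–transitive closure of a family of elementary moves, where each elementary move replaces a single generator occurring in an element by a fixed nonzero element of F (depending on the generator and the move type). If α, β, α₁, α₂ ∈ F∖{0} satisfy α = α₁ + α₂ and α → β, then there exist β₁, β₂ ∈ F∖{0} with β = β₁ + β₂, α₁ → β₁, and α₂ → β₂. -/
private lemma split_one {X I : Type} (adm : I → X → Prop) (si : I → X → (X →₀ ℕ))
    (hnz : ∀ i x, adm i x → si i x ≠ 0)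
    (step : (X →₀ ℕ) → (X →₀ ℕ) → Prop)
    (hstep : ∀ a b, step a b ↔
      ∃ (i : I) (x : X) (γ : X →₀ ℕ), adm i x ∧
        a = γ + Finsupp.single x 1 ∧ b = γ + si i x)
    (b c b₁ b₂ : X →₀ ℕ) (hb : b = b₁ + b₂) (hbc : step b c) :
    (∃ c₁, c₁ ≠ 0 ∧ c = c₁ + b₂ ∧ step b₁ c₁) ∨
    (∃ c₂, c₂ ≠ 0 ∧ c = b₁ + c₂ ∧ step b₂ c₂) := by
  obtain ⟨i, x, γ, hadm, hbγ, hcγ⟩ := (hstep b c).1 hbc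
  have hx : 1 ≤ b₁ x + b₂ x := by
    have : b x = γ x + 1 := by simp [hbγ]
    have hb' : b₁ x + b₂ x = γ x + 1 := by
      rw [← this, hb]; simp
    omega
  have hsnz := hnz i x hadm
  rcases (by omega : 1 ≤ b₁ x ∨ 1 ≤ b₂ x) with h1 | h1
  · left
    have hle : Finsupp.single x 1 ≤ b₁ := by
      rwa [Finsupp.single_le_iff]
    set δ := b₁ - Finsupp.single x 1 with hδ
    have hb₁ : b₁ = δ + Finsupp.single x 1 := by
      rw [hδ, tsub_add_cancel_of_le hle]
    have hγ : γ = δ + b₂ := by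
      have : γ + Finsupp.single x 1 = (δ + b₂) + Finsupp.single x 1 := by
        rw [← hbγ, hb, hb₁]; abel
      exact add_right_cancel this
    refine ⟨δ + si i x, ?_, ?_, ?_⟩
    · intro h0
      rw [add_eq_zero] at h0
      exact hsnz h0.2
    · rw [hcγ, hγ]; abel
    · exact (hstep _ _).2 ⟨i, x, δ, hadm, hb₁, rfl⟩
  · right
    have hle : Finsupp.single x 1 ≤ b₂ := by
      rwa [Finsupp.single_le_iff]
    set δ := b₂ - Finsupp.single x 1 with hδ
    have hb₂ : b₂ = δ + Finsupp.single x 1 := by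
      rw [hδ, tsub_add_cancel_of_le hle]
    have hγ : γ = b₁ + δ := by
      have : γ + Finsupp.single x 1 = (b₁ + δ) + Finsupp.single x 1 := by
        rw [← hbγ, hb, hb₂]; abel
      exact add_right_cancel this
    refine ⟨δ + si i x, ?_, ?_, ?_⟩
    · intro h0
      rw [add_eq_zero] at h0
      exact hsnz h0.2
    · rw [hcγ, hγ]; abel
    · exact (hstep _ _).2 ⟨i, x, δ, hadm, hb₂, rfl⟩

/-- **Splitting lemma for free commutative monoids.**
Let `F = ℕ^(X)` be the free commutative monoid on `X`, and let `step` be the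
family of elementary moves: `step a b` iff `a = γ + x` for some generator `x`
admissible for a move type `i`, and `b = γ + si i x` where `si i x ≠ 0`.
If `α = α₁ + α₂` with `α₁, α₂ ≠ 0` and `α → β` (reflexive–transitive closure),
then `β = β₁ + β₂` with `α₁ → β₁`, `α₂ → β₂` and `β₁, β₂ ≠ 0`. -/
theorem stmt0 {X I : Type} (adm : I → X → Prop) (si : I → X → (X →₀ ℕ))
    (hnz : ∀ i x, adm i x → si i x ≠ 0)
    (step : (X →₀ ℕ) → (X →₀ ℕ) → Prop)
    (hstep : ∀ a b, step a b ↔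
      ∃ (i : I) (x : X) (γ : X →₀ ℕ), adm i x ∧
        a = γ + Finsupp.single x 1 ∧ b = γ + si i x)
    (α β α₁ α₂ : X →₀ ℕ) (hα : α = α₁ + α₂) (h1 : α₁ ≠ 0) (h2 : α₂ ≠ 0)
    (h : Relation.ReflTransGen step α β) :
    ∃ β₁ β₂ : X →₀ ℕ, β₁ ≠ 0 ∧ β₂ ≠ 0 ∧ β = β₁ + β₂ ∧
      Relation.ReflTransGen step α₁ β₁ ∧ Relation.ReflTransGen step α₂ β₂ := by
  induction h with
  | refl => exact ⟨α₁, α₂, h1, h2, hα, .refl, .refl⟩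
  | tail hbc hone ih =>
    obtain ⟨β₁, β₂, hn1, hn2, hbeq, hr1, hr2⟩ := ih
    rcases split_one adm si hnz step hstep _ _ β₁ β₂ hbeq hone with
      ⟨c₁, hc₁, hceq, hs⟩ | ⟨c₂, hc₂, hceq, hs⟩
    · exact ⟨c₁, β₂, hc₁, hn2, hceq, hr1.tail hs, hr2⟩
    · exact ⟨β₁, c₂, hn1, hc₂, hceq, hr1, hr2.tail hs⟩
end

section
/- Let Λ be a row-finite k-graph with no sources. For any vertex u and any n ∈ ℕ^k, in the free commutative monoid on Λ⁰ with the transition relation → generated by u →ᵢ Σ_{α ∈ uΛ^{e_i}} s(α), one has u → Σ_{λ ∈ uΛ^n} s(λ). Consequently, for any m, n ∈ ℕ^k, Σ_{λ ∈ uΛ^n} s(λ) and Σ_{μ ∈ uΛ^m} s(μ) are congruent modulo the congruence generated by →. -/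
/-- A (small) `k`-graph: a small category `Λ` with vertex set `V`, path set `P`,
range and source maps `r, s`, a degree functor `d : Λ → ℕᵏ` satisfying the
unique factorization property. -/
structure KGraph (k : ℕ) where
  V : Type
  P : Type
  r : P → V
  s : P → V
  d : P → Fin k → ℕ
  ident : V → P
  comp : (p q : P) → s p = r q → P
  r_ident : ∀ v, r (ident v) = v
  s_ident : ∀ v, s (ident v) = v
  d_ident : ∀ v, d (ident v) = 0
  r_comp : ∀ p q h, r (comp p q h) = r p
  s_comp : ∀ p q h, s (comp p q h) = s q
  d_comp : ∀ p q h, d (comp p q h) = d p + d q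
  ident_comp : ∀ (p : P) (h : s (ident (r p)) = r p), comp (ident (r p)) p h = p
  comp_ident : ∀ (p : P) (h : s p = r (ident (s p))), comp p (ident (s p)) h = p
  comp_assoc : ∀ (p q t : P) (h1 : s p = r q) (h2 : s q = r t)
      (h3 : s (comp p q h1) = r t) (h4 : s p = r (comp q t h2)),
      comp (comp p q h1) t h3 = comp p (comp q t h2) h4
  factor : ∀ (p : P) (m n : Fin k → ℕ), d p = m + n →
      ∃! qt : P × P, ∃ h : s qt.1 = r qt.2,
        comp qt.1 qt.2 h = p ∧ d qt.1 = m ∧ d qt.2 = n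

namespace KGraph

variable {k : ℕ}

/-- `vΛⁿ`, the set of paths with range `v` and degree `n`. -/
def pathsSet (Λ : KGraph k) (v : Λ.V) (n : Fin k → ℕ) : Set Λ.P :=
  {p | Λ.r p = v ∧ Λ.d p = n}

/-- `Λ` is row-finite if every `vΛⁿ` is finite. -/
def RowFinite (Λ : KGraph k) : Prop := ∀ v n, (Λ.pathsSet v n).Finite

/-- `Λ` has no sources if every `vΛⁿ` is nonempty. -/
def NoSources (Λ : KGraph k) : Prop := ∀ v n, (Λ.pathsSet v n).Nonempty

/-- The element `Σ_{λ ∈ vΛⁿ} s(λ)` of the free commutative monoid `ℕ^(Λ⁰)`. -/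
noncomputable def vSum (Λ : KGraph k) (hfin : Λ.RowFinite) (v : Λ.V) (n : Fin k → ℕ) :
    Λ.V →₀ ℕ :=
  ∑ p ∈ (hfin v n).toFinset, Finsupp.single (Λ.s p) 1

end KGraph

namespace KGraph

/-- One-step generating relation `u ∼ Σ_{λ ∈ uΛ^{e_i}} s(λ)` (on single generators). -/
noncomputable def OneStepRel (Λ : KGraph k) (hfin : Λ.RowFinite) :
    (Λ.V →₀ ℕ) → (Λ.V →₀ ℕ) → Prop :=
  fun a b => ∃ (u : Λ.V) (i : Fin k),
    a = Finsupp.single u 1 ∧ b = Λ.vSum hfin u (Pi.single i 1)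

/-- Generating relation `u ∼ Σ_{λ ∈ uΛⁿ} s(λ)` for all degrees `n`. -/
noncomputable def AllRel (Λ : KGraph k) (hfin : Λ.RowFinite) :
    (Λ.V →₀ ℕ) → (Λ.V →₀ ℕ) → Prop :=
  fun a b => ∃ (u : Λ.V) (n : Fin k → ℕ),
    a = Finsupp.single u 1 ∧ b = Λ.vSum hfin u n

/-- The elementary move `→ᵢ`: replace one occurrence of a generator `u`
by `Σ_{λ ∈ uΛ^{e_i}} s(λ)`. -/
noncomputable def MoveStep (Λ : KGraph k) (hfin : Λ.RowFinite) :
    (Λ.V →₀ ℕ) → (Λ.V →₀ ℕ) → Prop :=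
  fun a b => ∃ (u : Λ.V) (i : Fin k) (γ : Λ.V →₀ ℕ),
    a = γ + Finsupp.single u 1 ∧ b = γ + Λ.vSum hfin u (Pi.single i 1)

/-- The relation `→`: the reflexive–transitive closure of the elementary moves. -/
noncomputable def Move (Λ : KGraph k) (hfin : Λ.RowFinite) :
    (Λ.V →₀ ℕ) → (Λ.V →₀ ℕ) → Prop :=
  Relation.ReflTransGen (MoveStep Λ hfin)

variable {Λ : KGraph k}

lemma d_zero_eq_ident {p : Λ.P} (h : Λ.d p = 0) : p = Λ.ident (Λ.r p) := by
  obtain ⟨qt, _, huniq⟩ := Λ.factor p 0 0 (by simp [h])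
  have h1 : ((Λ.ident (Λ.r p), p) : Λ.P × Λ.P) = qt :=
    huniq _ ⟨by rw [Λ.s_ident], Λ.ident_comp p _, Λ.d_ident _, h⟩
  have h2 : ((p, Λ.ident (Λ.s p)) : Λ.P × Λ.P) = qt :=
    huniq _ ⟨(Λ.r_ident _).symm, Λ.comp_ident p _, h, Λ.d_ident _⟩
  have := h1.trans h2.symm
  exact (congrArg Prod.fst this).symm

lemma pathsSet_zero (v : Λ.V) : Λ.pathsSet v 0 = {Λ.ident v} := by
  ext p
  constructor
  · rintro ⟨hr, hd⟩
    simp only [Set.mem_singleton_iff]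
    rw [d_zero_eq_ident hd, hr]
  · rintro rfl
    exact ⟨Λ.r_ident v, Λ.d_ident v⟩

lemma vSum_zero (hfin : Λ.RowFinite) (v : Λ.V) :
    Λ.vSum hfin v 0 = Finsupp.single v 1 := by
  unfold vSum
  have : (hfin v 0).toFinset = {Λ.ident v} := by
    ext p; simp [Set.Finite.mem_toFinset, pathsSet_zero]
  rw [this, Finset.sum_singleton, Λ.s_ident]

/-- Unique factorization data. -/
noncomputable def split (Λ : KGraph k) (p : Λ.P) (m n : Fin k → ℕ) (h : Λ.d p = m + n) :
    Λ.P × Λ.P :=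
  (Λ.factor p m n h).choose

lemma split_spec (p : Λ.P) (m n : Fin k → ℕ) (h : Λ.d p = m + n) :
    ∃ hc : Λ.s (Λ.split p m n h).1 = Λ.r (Λ.split p m n h).2,
      Λ.comp _ _ hc = p ∧ Λ.d (Λ.split p m n h).1 = m ∧ Λ.d (Λ.split p m n h).2 = n :=
  (Λ.factor p m n h).choose_spec.1

lemma split_unique {p : Λ.P} {m n : Fin k → ℕ} (h : Λ.d p = m + n)
    {a b : Λ.P} (hab : Λ.s a = Λ.r b) (hc : Λ.comp a b hab = p)
    (hda : Λ.d a = m) (hdb : Λ.d b = n) : Λ.split p m n h = (a, b) :=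
  ((Λ.factor p m n h).choose_spec.2 (a, b) ⟨hab, hc, hda, hdb⟩).symm

lemma vSum_add (hfin : Λ.RowFinite) (u : Λ.V) (m n : Fin k → ℕ) :
    Λ.vSum hfin u (m + n) = ∑ p ∈ (hfin u m).toFinset, Λ.vSum hfin (Λ.s p) n := by
  unfold vSum
  rw [← Finset.sum_sigma ((hfin u m).toFinset) (fun p => (hfin (Λ.s p) n).toFinset)
    (fun x => Finsupp.single (Λ.s x.2) 1)]
  refine Finset.sum_bij'
    (i := fun p hp => ⟨(Λ.split p m n ?_).1, (Λ.split p m n ?_).2⟩)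
    (j := fun x hx => Λ.comp x.1 x.2 ?_) ?_ ?_ ?_ ?_ ?_
  · exact ((hfin u (m+n)).mem_toFinset.mp hp).2
  · exact ((hfin u (m+n)).mem_toFinset.mp hp).2
  · -- s x.1 = r x.2
    have hx2 := (Finset.mem_sigma.mp hx).2
    exact (((hfin _ n).mem_toFinset.mp hx2).1).symm
  · -- i maps into sigma finset
    intro p hp
    obtain ⟨hr, hd⟩ := (hfin u (m+n)).mem_toFinset.mp hp
    obtain ⟨hc, hcomp, hd1, hd2⟩ := Λ.split_spec p m n hd
    refine Finset.mem_sigma.mpr ⟨?_, ?_⟩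
    · refine (hfin u m).mem_toFinset.mpr ⟨?_, hd1⟩
      show Λ.r (Λ.split p m n hd).1 = u
      calc Λ.r (Λ.split p m n hd).1
          = Λ.r (Λ.comp (Λ.split p m n hd).1 (Λ.split p m n hd).2 hc) :=
            (Λ.r_comp _ _ hc).symm
        _ = Λ.r p := by rw [hcomp]
        _ = u := hr
    · exact (hfin _ n).mem_toFinset.mpr ⟨hc.symm, hd2⟩
  · -- j maps into paths set
    intro x hx
    obtain ⟨hx1, hx2⟩ := Finset.mem_sigma.mp hx
    obtain ⟨hr1, hd1⟩ := (hfin u m).mem_toFinset.mp hx1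
    obtain ⟨hr2, hd2⟩ := (hfin _ n).mem_toFinset.mp hx2
    refine (hfin u (m+n)).mem_toFinset.mpr ⟨?_, ?_⟩
    · rw [Λ.r_comp]; exact hr1
    · rw [Λ.d_comp, hd1, hd2]
  · -- left inverse : comp (split p).1 (split p).2 = p
    intro p hp
    obtain ⟨hr, hd⟩ := (hfin u (m+n)).mem_toFinset.mp hp
    obtain ⟨hc, hcomp, hd1, hd2⟩ := Λ.split_spec p m n hd
    exact hcomp
  · -- right inverse : split (comp x.1 x.2) = x
    intro x hx
    obtain ⟨hx1, hx2⟩ := Finset.mem_sigma.mp hx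
    obtain ⟨hr1, hd1⟩ := (hfin u m).mem_toFinset.mp hx1
    obtain ⟨hr2, hd2⟩ := (hfin _ n).mem_toFinset.mp hx2
    have hab : Λ.s x.1 = Λ.r x.2 := hr2.symm
    have hd : Λ.d (Λ.comp x.1 x.2 hab) = m + n := by rw [Λ.d_comp, hd1, hd2]
    have huniq := Λ.split_unique hd hab rfl hd1 hd2
    show (⟨(Λ.split (Λ.comp x.1 x.2 hab) m n hd).1,
        (Λ.split (Λ.comp x.1 x.2 hab) m n hd).2⟩ : (_ : Λ.P) × Λ.P) = x
    rw [huniq]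
  · -- values agree
    intro p hp
    obtain ⟨hr, hd⟩ := (hfin u (m+n)).mem_toFinset.mp hp
    obtain ⟨hc, hcomp, hd1, hd2⟩ := Λ.split_spec p m n hd
    show Finsupp.single (Λ.s p) 1 = Finsupp.single (Λ.s (Λ.split p m n hd).2) 1
    have hs : Λ.s (Λ.split p m n hd).2 = Λ.s p := by
      rw [← Λ.s_comp _ _ hc, hcomp]
    rw [hs]


section MoveLemmas
variable {hfin : Λ.RowFinite}

lemma moveStep_add (c : Λ.V →₀ ℕ) {a b : Λ.V →₀ ℕ} (h : MoveStep Λ hfin a b) :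
    MoveStep Λ hfin (c + a) (c + b) := by
  obtain ⟨u, i, γ, rfl, rfl⟩ := h
  exact ⟨u, i, c + γ, by rw [add_assoc], by rw [add_assoc]⟩

lemma move_add (c : Λ.V →₀ ℕ) {a b : Λ.V →₀ ℕ} (h : Move Λ hfin a b) :
    Move Λ hfin (c + a) (c + b) :=
  Relation.ReflTransGen.lift (c + ·) (fun _ _ h => moveStep_add c h) _ _ h

lemma move_sum {ι : Type*} (s : Finset ι) (f g : ι → (Λ.V →₀ ℕ))
    (h : ∀ i ∈ s, Move Λ hfin (f i) (g i)) :
    Move Λ hfin (∑ i ∈ s, f i) (∑ i ∈ s, g i) := by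
  induction s using Finset.cons_induction with
  | empty => exact Relation.ReflTransGen.refl
  | cons a s ha ih =>
    rw [Finset.sum_cons, Finset.sum_cons]
    have h1 : Move Λ hfin (f a + ∑ i ∈ s, f i) (f a + ∑ i ∈ s, g i) :=
      move_add _ (ih fun i hi => h i (Finset.mem_cons_of_mem hi))
    have h2 : Move Λ hfin (f a + ∑ i ∈ s, g i) (g a + ∑ i ∈ s, g i) := by
      rw [add_comm (f a), add_comm (g a)]
      exact move_add _ (h a (Finset.mem_cons_self a s))
    exact h1.trans h2

lemma move_single_step (u : Λ.V) (i : Fin k) :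
    MoveStep Λ hfin (Finsupp.single u 1) (Λ.vSum hfin u (Pi.single i 1)) :=
  ⟨u, i, 0, (zero_add _).symm, (zero_add _).symm⟩

lemma move_main (u : Λ.V) (n : Fin k → ℕ) :
    Move Λ hfin (Finsupp.single u 1) (Λ.vSum hfin u n) := by
  suffices H : ∀ (N : ℕ) (u : Λ.V) (n : Fin k → ℕ), (∑ i, n i) = N →
      Move Λ hfin (Finsupp.single u 1) (Λ.vSum hfin u n) from H _ u n rfl
  intro N
  induction N with
  | zero =>
    intro u n hn
    have : n = 0 := by
      funext i
      exact Finset.sum_eq_zero_iff.mp hn i (Finset.mem_univ i)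
    rw [this, vSum_zero]
    exact Relation.ReflTransGen.refl
  | succ N ih =>
    intro u n hn
    have hex : ∃ i, n i ≠ 0 := by
      by_contra hc
      push_neg at hc
      simp [Finset.sum_eq_zero fun i _ => hc i] at hn
    obtain ⟨i, hi⟩ := hex
    set m : Fin k → ℕ := Function.update n i (n i - 1) with hm
    have hmn : m + Pi.single i 1 = n := by
      funext j
      by_cases hj : j = i
      · subst hj; simp [hm, Function.update_self]; omega
      · simp [hm, Function.update_of_ne hj, Pi.single_eq_of_ne hj]
    have hsum : (∑ j, m j) = N := by
      have h1 : ∑ j, n j = n i + ∑ j ∈ Finset.univ.erase i, n j :=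
        (Finset.add_sum_erase _ _ (Finset.mem_univ i)).symm
      have h2 : ∑ j, m j = m i + ∑ j ∈ Finset.univ.erase i, m j :=
        (Finset.add_sum_erase _ _ (Finset.mem_univ i)).symm
      have h3 : ∑ j ∈ Finset.univ.erase i, m j = ∑ j ∈ Finset.univ.erase i, n j :=
        Finset.sum_congr rfl fun j hj =>
          Function.update_of_ne (Finset.ne_of_mem_erase hj) _ _
      have h4 : m i = n i - 1 := Function.update_self _ _ _
      omega
    have step1 : Move Λ hfin (Finsupp.single u 1) (Λ.vSum hfin u m) := ih u m hsum
    have step2 : Move Λ hfin (Λ.vSum hfin u m)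
        (∑ p ∈ (hfin u m).toFinset, Λ.vSum hfin (Λ.s p) (Pi.single i 1)) := by
      unfold vSum
      exact move_sum _ _ _ fun p _ => Relation.ReflTransGen.single (move_single_step _ i)
    rw [← hmn, vSum_add]
    exact step1.trans step2
end MoveLemmas

end KGraph

open KGraph in
/-- Let `Λ` be a row-finite `k`-graph with no sources. Then in the free commutative
monoid on `Λ⁰`, `u → Σ_{λ ∈ uΛⁿ} s(λ)`, and consequently for all `m, n`,
`Σ_{λ ∈ uΛⁿ} s(λ)` and `Σ_{μ ∈ uΛᵐ} s(μ)` are congruent modulo the congruence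
generated by `→`. -/
theorem stmt2 {k : ℕ} (Λ : KGraph k) (hfin : Λ.RowFinite) (hns : Λ.NoSources)
    (u : Λ.V) (n : Fin k → ℕ) :
    Move Λ hfin (Finsupp.single u 1) (Λ.vSum hfin u n) ∧
    ∀ m : Fin k → ℕ,
      (addConGen (MoveStep Λ hfin)) (Λ.vSum hfin u n) (Λ.vSum hfin u m) := by
  have con_of_move : ∀ {a b : Λ.V →₀ ℕ}, Move Λ hfin a b →
      (addConGen (MoveStep Λ hfin)) a b := by
    intro a b h
    induction h with
    | refl => exact (addConGen (MoveStep Λ hfin)).refl _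
    | tail _ hstep ih =>
      exact (addConGen (MoveStep Λ hfin)).trans ih (AddConGen.Rel.of _ _ hstep)
  have key : ∀ (w : Λ.V) (p : Fin k → ℕ),
      (addConGen (MoveStep Λ hfin)) (Finsupp.single w 1) (Λ.vSum hfin w p) :=
    fun w p => con_of_move (move_main (hfin := hfin) w p)
  refine ⟨move_main u n, fun m => ?_⟩
  exact ((addConGen (MoveStep Λ hfin)).symm (key u n)).trans (key u m)
end

section
/- Let Λ be a row-finite k-graph with no sources and let T_Λ be its talented monoid. For any ℤ^k-order ideal J of T_Λ, the set H_J := {v ∈ Λ⁰ : v(0) ∈ J} is hereditary and saturated in Λ⁰. -/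
namespace KGraph

/-- The free commutative monoid on `Λ⁰ × ℤᵏ`. -/
abbrev TalF (Λ : KGraph k) : Type := (Λ.V × (Fin k → ℤ)) →₀ ℕ

/-- The defining relations of the talented monoid:
`v(n) = Σ_{α ∈ vΛ^{e_i}} s(α)(n + e_i)`. -/
noncomputable def TalRel (Λ : KGraph k) (hfin : Λ.RowFinite) : TalF Λ → TalF Λ → Prop :=
  fun a b => ∃ (v : Λ.V) (n : Fin k → ℤ) (i : Fin k),
    a = Finsupp.single (v, n) 1 ∧
    b = ∑ p ∈ (hfin v (Pi.single i 1)).toFinset,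
          Finsupp.single (Λ.s p, n + Pi.single i 1) 1

/-- The congruence generated by the defining relations of the talented monoid. -/
noncomputable def TalCon (Λ : KGraph k) (hfin : Λ.RowFinite) : AddCon (TalF Λ) :=
  addConGen (TalRel Λ hfin)

/-- The talented monoid `T_Λ`. -/
abbrev Tal (Λ : KGraph k) (hfin : Λ.RowFinite) : Type := (TalCon Λ hfin).Quotient

/-- The quotient map `ℕ^(Λ⁰ × ℤᵏ) → T_Λ`. -/
noncomputable def tmk (Λ : KGraph k) (hfin : Λ.RowFinite) : TalF Λ → Tal Λ hfin :=
  (TalCon Λ hfin).mk'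

/-- Shift of states on the free commutative monoid; it induces the `ℤᵏ`-action on `T_Λ`. -/
noncomputable def shiftF (Λ : KGraph k) (p : Fin k → ℤ) : TalF Λ → TalF Λ :=
  Finsupp.mapDomain (fun q => (q.1, q.2 + p))

/-- A `ℤᵏ`-order ideal of `T_Λ`: a submonoid, downward closed in the algebraic
preorder, and closed under the `ℤᵏ`-action (expressed on representatives). -/
noncomputable def IsOrderIdeal (Λ : KGraph k) (hfin : Λ.RowFinite)
    (J : Set (Tal Λ hfin)) : Prop :=
  (0 : Tal Λ hfin) ∈ J ∧
  (∀ a b, a ∈ J → b ∈ J → a + b ∈ J) ∧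
  (∀ a b : Tal Λ hfin, a + b ∈ J → a ∈ J) ∧
  (∀ (p : Fin k → ℤ) (a : TalF Λ), tmk Λ hfin a ∈ J → tmk Λ hfin (shiftF Λ p a) ∈ J)

/-- `H ⊆ Λ⁰` is hereditary. -/
def Hereditary (Λ : KGraph k) (H : Set Λ.V) : Prop :=
  ∀ p : Λ.P, Λ.r p ∈ H → Λ.s p ∈ H

/-- `H ⊆ Λ⁰` is saturated. -/
def Saturated (Λ : KGraph k) (H : Set Λ.V) : Prop :=
  ∀ (v : Λ.V) (n : Fin k → ℕ),
    (∀ p : Λ.P, Λ.r p = v → Λ.d p = n → Λ.s p ∈ H) → v ∈ H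

/-- The `ℤᵏ`-order ideal of `T_Λ` generated by a set `X ⊆ Λ⁰` of vertices:
all `x` with `x ≤ Σᵢ ⁿⁱvᵢ` for finitely many `vᵢ ∈ X`, `nᵢ ∈ ℤᵏ`. -/
noncomputable def genIdeal (Λ : KGraph k) (hfin : Λ.RowFinite) (X : Set Λ.V) :
    Set (Tal Λ hfin) :=
  {x | ∃ b : TalF Λ, (∀ q ∈ b.support, q.1 ∈ X) ∧ ∃ z, x + z = tmk Λ hfin b}

end KGraph

namespace KGraph

variable {k : ℕ}

/-- Cast of a `ℕ`-vector to a `ℤ`-vector. -/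
def castn (n : Fin k → ℕ) : Fin k → ℤ := fun i => (n i : ℤ)

lemma castn_single (i : Fin k) : castn (Pi.single i 1) = (Pi.single i 1 : Fin k → ℤ) := by
  funext j
  simp [castn, Pi.single_apply, apply_ite (Nat.cast : ℕ → ℤ)]

lemma deg_zero_eq_ident (Λ : KGraph k) (p : Λ.P) (hp : Λ.d p = 0) :
    p = Λ.ident (Λ.r p) := by
  obtain ⟨qt, _, huniq⟩ := Λ.factor p 0 0 (by simp [hp])
  have h1 : Λ.s (Λ.ident (Λ.r p)) = Λ.r p := Λ.s_ident _
  have h2 : Λ.s p = Λ.r (Λ.ident (Λ.s p)) := (Λ.r_ident _).symm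
  have e1 : ((Λ.ident (Λ.r p), p) : Λ.P × Λ.P) = qt :=
    huniq _ ⟨h1, Λ.ident_comp p h1, Λ.d_ident _, hp⟩
  have e2 : ((p, Λ.ident (Λ.s p)) : Λ.P × Λ.P) = qt :=
    huniq _ ⟨h2, Λ.comp_ident p h2, hp, Λ.d_ident _⟩
  have := e1.trans e2.symm
  exact (congrArg Prod.fst this).symm

lemma toFinset_zero (Λ : KGraph k) (hfin : Λ.RowFinite) (v : Λ.V) :
    (hfin v 0).toFinset = {Λ.ident v} := by
  ext p
  simp only [Set.Finite.mem_toFinset, Finset.mem_singleton]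
  constructor
  · rintro ⟨h1, h2⟩
    rw [deg_zero_eq_ident Λ p h2, h1]
  · rintro rfl
    exact ⟨Λ.r_ident v, Λ.d_ident v⟩

lemma tmk_rel (Λ : KGraph k) (hfin : Λ.RowFinite) (v : Λ.V) (n : Fin k → ℤ) (i : Fin k) :
    tmk Λ hfin (Finsupp.single (v, n) 1) =
    tmk Λ hfin (∑ p ∈ (hfin v (Pi.single i 1)).toFinset,
        Finsupp.single (Λ.s p, n + Pi.single i 1) 1) :=
  (AddCon.eq _).2 (AddConGen.Rel.of _ _ ⟨v, n, i, rfl, rfl⟩)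

lemma key (Λ : KGraph k) (hfin : Λ.RowFinite) (N : ℕ) :
    ∀ (v : Λ.V) (n : Fin k → ℕ), (∑ i, n i) = N → ∀ (m : Fin k → ℤ),
    tmk Λ hfin (Finsupp.single (v, m) 1) =
    tmk Λ hfin (∑ p ∈ (hfin v n).toFinset, Finsupp.single (Λ.s p, m + castn n) 1) := by
  induction N using Nat.strong_induction_on with
  | _ N ih =>
  intro v n hN m
  by_cases hz : ∃ i, n i ≠ 0
  · obtain ⟨i, hi⟩ := hz
    set e : Fin k → ℕ := Pi.single i 1 with he
    set n' : Fin k → ℕ := fun j => n j - e j with hn'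
    have hne : n = e + n' := by
      funext j
      by_cases h : j = i <;> simp [he, hn', Pi.single_apply, h] <;> omega
    have hsum : (∑ j, n' j) < N := by
      have h1 : (∑ j, n j) = (∑ j, e j) + ∑ j, n' j := by
        rw [hne]; exact Finset.sum_add_distrib
      have h2 : (∑ j, e j) = 1 := by
        simp [he, Pi.single_apply]
      have h3 : 1 ≤ n i := Nat.one_le_iff_ne_zero.2 hi
      omega
    have hc : m + (Pi.single i 1 : Fin k → ℤ) + castn n' = m + castn n := by
      funext j
      have h2 := congrFun hne j
      by_cases h : j = i <;>
        simp [he, Pi.single_apply, h, castn] at h2 ⊢ <;> omega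
    have memA : ∀ x ∈ (hfin v e).toFinset, Λ.r x = v ∧ Λ.d x = e := by
      intro x hx
      exact (Set.Finite.mem_toFinset (hfin v e)).1 hx
    have memB : ∀ (α : Λ.P), ∀ x ∈ (hfin (Λ.s α) n').toFinset,
        Λ.r x = Λ.s α ∧ Λ.d x = n' := by
      intro α x hx
      exact (Set.Finite.mem_toFinset (hfin (Λ.s α) n')).1 hx
    have hdouble :
        (∑ α ∈ (hfin v e).toFinset, ∑ β ∈ (hfin (Λ.s α) n').toFinset,
          (Finsupp.single (Λ.s β, m + castn n) 1 : TalF Λ)) =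
        ∑ p ∈ (hfin v n).toFinset, Finsupp.single (Λ.s p, m + castn n) 1 := by
      rw [Finset.sum_sigma']
      refine Finset.sum_bij
        (fun x hx => Λ.comp x.1 x.2
          (((memB x.1 x.2 ((Finset.mem_sigma.1 hx).2)).1).symm))
        ?_ ?_ ?_ ?_
      · intro a ha
        obtain ⟨ha1, ha2⟩ := Finset.mem_sigma.1 ha
        refine (Set.Finite.mem_toFinset _).2 ⟨?_, ?_⟩
        · rw [Λ.r_comp]; exact (memA a.1 ha1).1
        · rw [Λ.d_comp, (memA a.1 ha1).2, (memB a.1 a.2 ha2).2, hne]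
      · intro a ha b hb hab
        obtain ⟨ha1, ha2⟩ := Finset.mem_sigma.1 ha
        obtain ⟨hb1, hb2⟩ := Finset.mem_sigma.1 hb
        have hsa : Λ.s a.1 = Λ.r a.2 := ((memB a.1 a.2 ha2).1).symm
        have hda : Λ.d (Λ.comp a.1 a.2 hsa) = e + n' := by
          rw [Λ.d_comp, (memA a.1 ha1).2, (memB a.1 a.2 ha2).2]
        obtain ⟨qt, _, huniq⟩ := Λ.factor (Λ.comp a.1 a.2 hsa) e n' hda
        have e1 : ((a.1, a.2) : Λ.P × Λ.P) = qt :=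
          huniq _ ⟨hsa, rfl, (memA a.1 ha1).2, (memB a.1 a.2 ha2).2⟩
        have e2 : ((b.1, b.2) : Λ.P × Λ.P) = qt :=
          huniq _ ⟨((memB b.1 b.2 hb2).1).symm, hab.symm,
            (memA b.1 hb1).2, (memB b.1 b.2 hb2).2⟩
        have h12 := e1.trans e2.symm
        obtain ⟨a1, a2⟩ := a
        obtain ⟨b1, b2⟩ := b
        simp only [Prod.mk.injEq] at h12
        simp [h12.1, h12.2]
      · intro p hp
        obtain ⟨hp1, hp2⟩ := (Set.Finite.mem_toFinset _).1 hp
        obtain ⟨qt, ⟨hqt, hcomp, hd1, hd2⟩, _⟩ := Λ.factor p e n' (by rw [hp2, hne])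
        have hq1 : qt.1 ∈ (hfin v e).toFinset := by
          refine (Set.Finite.mem_toFinset _).2 ⟨?_, hd1⟩
          rw [← hp1, ← hcomp, Λ.r_comp]
        have hq2 : qt.2 ∈ (hfin (Λ.s qt.1) n').toFinset :=
          (Set.Finite.mem_toFinset _).2 ⟨hqt.symm, hd2⟩
        exact ⟨⟨qt.1, qt.2⟩, Finset.mem_sigma.2 ⟨hq1, hq2⟩, hcomp⟩
      · intro a ha
        rw [Λ.s_comp]
    calc tmk Λ hfin (Finsupp.single (v, m) 1)
        = tmk Λ hfin (∑ α ∈ (hfin v e).toFinset,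
            Finsupp.single (Λ.s α, m + Pi.single i 1) 1) := tmk_rel Λ hfin v m i
      _ = ∑ α ∈ (hfin v e).toFinset,
            tmk Λ hfin (Finsupp.single (Λ.s α, m + Pi.single i 1) 1) :=
          map_sum ((TalCon Λ hfin).mk') _ _
      _ = ∑ α ∈ (hfin v e).toFinset,
            tmk Λ hfin (∑ β ∈ (hfin (Λ.s α) n').toFinset,
              Finsupp.single (Λ.s β, (m + Pi.single i 1) + castn n') 1) := by
          refine Finset.sum_congr rfl fun α _ => ?_
          exact ih _ hsum (Λ.s α) n' rfl (m + Pi.single i 1)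
      _ = tmk Λ hfin (∑ α ∈ (hfin v e).toFinset,
            ∑ β ∈ (hfin (Λ.s α) n').toFinset,
              Finsupp.single (Λ.s β, (m + Pi.single i 1) + castn n') 1) :=
          (map_sum ((TalCon Λ hfin).mk') _ _).symm
      _ = tmk Λ hfin (∑ p ∈ (hfin v n).toFinset,
            Finsupp.single (Λ.s p, m + castn n) 1) := by
          rw [← hdouble]
          simp only [hc]
  · push_neg at hz
    have hn0 : n = 0 := funext fun i => hz i
    subst hn0
    rw [toFinset_zero Λ hfin v]
    have : castn (0 : Fin k → ℕ) = 0 := by funext j; simp [castn]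
    rw [Finset.sum_singleton, Λ.s_ident, this, add_zero]

end KGraph

open KGraph in
/-- For a row-finite `k`-graph `Λ` with no sources and a `ℤᵏ`-order ideal `J` of
the talented monoid `T_Λ`, the set `H_J = {v : v(0) ∈ J}` is hereditary and
saturated. -/
theorem stmt10 {k : ℕ} (Λ : KGraph k) (hfin : Λ.RowFinite) (hns : Λ.NoSources)
    (J : Set (Tal Λ hfin)) (hJ : IsOrderIdeal Λ hfin J) :
    Hereditary Λ {v | tmk Λ hfin (Finsupp.single (v, (0 : Fin k → ℤ)) 1) ∈ J} ∧
    Saturated Λ {v | tmk Λ hfin (Finsupp.single (v, (0 : Fin k → ℤ)) 1) ∈ J} := by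
  classical
  constructor
  · intro p hp
    have hk := key Λ hfin (∑ i, Λ.d p i) (Λ.r p) (Λ.d p) rfl 0
    rw [Set.mem_setOf_eq, hk] at hp
    have hmem : p ∈ (hfin (Λ.r p) (Λ.d p)).toFinset := by
      exact (Set.Finite.mem_toFinset (hfin (Λ.r p) (Λ.d p))).2 ⟨rfl, rfl⟩
    rw [← Finset.add_sum_erase _ _ hmem] at hp
    have hadd : tmk Λ hfin (Finsupp.single (Λ.s p, 0 + castn (Λ.d p)) 1 +
        ∑ x ∈ (hfin (Λ.r p) (Λ.d p)).toFinset.erase p,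
          Finsupp.single (Λ.s x, 0 + castn (Λ.d p)) 1) =
        tmk Λ hfin (Finsupp.single (Λ.s p, 0 + castn (Λ.d p)) 1) +
        tmk Λ hfin (∑ x ∈ (hfin (Λ.r p) (Λ.d p)).toFinset.erase p,
          Finsupp.single (Λ.s x, 0 + castn (Λ.d p)) 1) :=
      map_add ((TalCon Λ hfin).mk') _ _
    rw [hadd] at hp
    have h1 : tmk Λ hfin (Finsupp.single (Λ.s p, 0 + castn (Λ.d p)) 1) ∈ J :=
      hJ.2.2.1 _ _ hp
    have h2 := hJ.2.2.2 (-(castn (Λ.d p))) _ h1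
    have h3 : shiftF Λ (-(castn (Λ.d p)))
        (Finsupp.single (Λ.s p, 0 + castn (Λ.d p)) 1) =
        Finsupp.single (Λ.s p, (0 : Fin k → ℤ)) 1 := by
      rw [shiftF, Finsupp.mapDomain_single]
      congr 1
      refine Prod.ext rfl ?_
      show (0 : Fin k → ℤ) + castn (Λ.d p) + -(castn (Λ.d p)) = 0
      abel
    rw [h3] at h2
    exact h2
  · intro v n hH
    have hk := key Λ hfin (∑ i, n i) v n rfl 0
    rw [Set.mem_setOf_eq, hk]
    have hsum : tmk Λ hfin (∑ p ∈ (hfin v n).toFinset,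
        Finsupp.single (Λ.s p, 0 + castn n) 1) =
        ∑ p ∈ (hfin v n).toFinset,
          tmk Λ hfin (Finsupp.single (Λ.s p, 0 + castn n) 1) :=
      map_sum ((TalCon Λ hfin).mk') _ _
    rw [hsum]
    refine Finset.sum_induction _ (· ∈ J) (fun a b ha hb => hJ.2.1 a b ha hb) hJ.1 ?_
    intro p hp
    obtain ⟨hr, hd⟩ := (Set.Finite.mem_toFinset (hfin v n)).1 hp
    have h0 : tmk Λ hfin (Finsupp.single (Λ.s p, (0 : Fin k → ℤ)) 1) ∈ J := hH p hr hd
    have h1 := hJ.2.2.2 (castn n) _ h0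
    have h2 : shiftF Λ (castn n) (Finsupp.single (Λ.s p, (0 : Fin k → ℤ)) 1) =
        Finsupp.single (Λ.s p, 0 + castn n) 1 := by
      rw [shiftF, Finsupp.mapDomain_single]
    rw [h2] at h1
    exact h1
end

section
/- Let Λ be a row-finite k-graph with no sources. Every ℤ^k-order ideal J of the talented monoid T_Λ is generated (as a ℤ^k-order ideal) by the set {v(0) : v ∈ Λ⁰, v(0) ∈ J}. -/
open KGraph in
lemma tmk_add' {k : ℕ} (Λ : KGraph k) (hfin : Λ.RowFinite) (a b : TalF Λ) :
    tmk Λ hfin (a + b) = tmk Λ hfin a + tmk Λ hfin b :=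
  (TalCon Λ hfin).mk'.map_add a b

open KGraph in
lemma tmk_zero' {k : ℕ} (Λ : KGraph k) (hfin : Λ.RowFinite) :
    tmk Λ hfin 0 = 0 :=
  (TalCon Λ hfin).mk'.map_zero

open KGraph in
/-- For a row-finite `k`-graph `Λ` with no sources, every `ℤᵏ`-order ideal `J` of
the talented monoid `T_Λ` is generated (as a `ℤᵏ`-order ideal) by
`{v(0) : v(0) ∈ J}`. -/
theorem stmt11 {k : ℕ} (Λ : KGraph k) (hfin : Λ.RowFinite) (hns : Λ.NoSources)
    (J : Set (Tal Λ hfin)) (hJ : IsOrderIdeal Λ hfin J) :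
    J = genIdeal Λ hfin {v | tmk Λ hfin (Finsupp.single (v, (0 : Fin k → ℤ)) 1) ∈ J} := by
  obtain ⟨h0, hadd, hdown, hshift⟩ := hJ
  ext x
  constructor
  · intro hx
    obtain ⟨a, rfl⟩ := AddCon.mk'_surjective (c := TalCon Λ hfin) x
    refine ⟨a, ?_, 0, add_zero _⟩
    intro q hq
    have h1 : tmk Λ hfin (Finsupp.single q 1) ∈ J := by
      have hdecomp : a = Finsupp.single q 1 +
          (Finsupp.single q (a q - 1) + a.erase q) := by
        rw [← add_assoc, ← Finsupp.single_add]
        have hne := Finsupp.mem_support_iff.mp hq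
        have h1' : 1 + (a q - 1) = a q := by omega
        rw [h1', Finsupp.single_add_erase]
      have heq : tmk Λ hfin a = tmk Λ hfin (Finsupp.single q 1) +
          tmk Λ hfin (Finsupp.single q (a q - 1) + a.erase q) := by
        conv_lhs => rw [hdecomp]
        exact tmk_add' Λ hfin _ _
      have hx' : tmk Λ hfin a ∈ J := hx
      exact hdown _ _ (heq ▸ hx')
    have h2 := hshift (-q.2) _ h1
    have h3 : shiftF Λ (-q.2) (Finsupp.single q 1) =
        Finsupp.single (q.1, (0 : Fin k → ℤ)) 1 := by
      simp [shiftF, Finsupp.mapDomain_single]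
    rwa [h3] at h2
  · rintro ⟨b, hb, z, hz⟩
    have key : ∀ b' : TalF Λ,
        (∀ q ∈ b'.support, tmk Λ hfin (Finsupp.single (q.1, (0 : Fin k → ℤ)) 1) ∈ J) →
        tmk Λ hfin b' ∈ J := by
      intro b'
      induction b' using Finsupp.induction with
      | zero => intro _; rw [tmk_zero']; exact h0
      | single_add q n f hqf hn ih =>
        intro hs
        have hq : tmk Λ hfin (Finsupp.single (q.1, (0 : Fin k → ℤ)) 1) ∈ J := by
          apply hs
          rw [Finsupp.mem_support_iff]
          have : f q = 0 := Finsupp.notMem_support_iff.mp hqf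
          simp [this, hn]
        have hfJ : tmk Λ hfin f ∈ J := by
          apply ih
          intro q' hq'
          apply hs
          rw [Finsupp.mem_support_iff]
          have := Finsupp.mem_support_iff.mp hq'
          simp only [Finsupp.add_apply]
          omega
        have hq1 : tmk Λ hfin (Finsupp.single q 1) ∈ J := by
          have h2 := hshift q.2 _ hq
          have h3 : shiftF Λ q.2 (Finsupp.single (q.1, (0 : Fin k → ℤ)) 1) =
              Finsupp.single q 1 := by
            simp [shiftF, Finsupp.mapDomain_single]
          rwa [h3] at h2
        have hqn : tmk Λ hfin (Finsupp.single q n) ∈ J := by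
          clear hn hs
          induction n with
          | zero =>
            have : (Finsupp.single q 0 : TalF Λ) = 0 := Finsupp.single_zero q
            rw [this, tmk_zero']; exact h0
          | succ m ihm =>
            have : Finsupp.single q (m + 1) = Finsupp.single q m + Finsupp.single q 1 := by
              rw [← Finsupp.single_add]
            rw [this, tmk_add']
            exact hadd _ _ ihm hq1
        rw [tmk_add']
        exact hadd _ _ hqn hfJ
    have hbJ := key b hb
    rw [← hz] at hbJ
    exact hdown _ _ hbJ
end
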